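/- Every matrix A ∈ GL(n, ℚ_p) can be written as a product A = B·R with B ∈ GL(n, ℤ_p) and R ∈ GL(n, ℚ). -/

import Mathlib

private lemma aux_prod_sub_one {p : ℕ} [Fact p.Prime] {ι : Type*} {r : ℝ} (hr0 : 0 ≤ r)
    (hr1 : r ≤ 1) (s : Finset ι) (f : ι → ℚ_[p]) (h : ∀ i ∈ s, ‖f i - 1‖ ≤ r) :
    ‖(∏ i ∈ s, f i) - 1‖ ≤ r := by
  classical
  induction s using Finset.cons_induction_on with
  | empty => simpa using hr0
  | cons a s ha ih =>
    have hP : ‖(∏ i ∈ s, f i) - 1‖ ≤ r := ih fun i hi => h i (Finset.mem_cons_of_mem hi)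
    have hPle : ‖∏ i ∈ s, f i‖ ≤ 1 := by
      have := Padic.nonarchimedean (1 : ℚ_[p]) ((∏ i ∈ s, f i) - 1)
      simp only [add_sub_cancel] at this
      exact this.trans (by simp [max_le_iff, hP.trans hr1])
    have hfa : ‖f a - 1‖ ≤ r := h a (Finset.mem_cons_self a s)
    rw [Finset.prod_cons]
    have key : f a * (∏ i ∈ s, f i) - 1 =
        (f a - 1) * (∏ i ∈ s, f i) + ((∏ i ∈ s, f i) - 1) := by ring
    rw [key]
    refine (Padic.nonarchimedean _ _).trans (max_le ?_ hP)
    rw [norm_mul]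
    calc ‖f a - 1‖ * ‖∏ i ∈ s, f i‖ ≤ r * 1 :=
      mul_le_mul hfa hPle (norm_nonneg _) hr0
    _ = r := mul_one r

/-- Every `A ∈ GL(n,ℚ_[p])` can be written as a product `A = B · R` with
`B ∈ GL(n,ℤ_[p])` and `R ∈ GL(n,ℚ)`, where `ℤ_[p]` and `ℚ` are embedded in `ℚ_[p]`
canonically. -/
theorem stmt_14 (p : ℕ) [Fact p.Prime] (n : ℕ) (A : GL (Fin n) ℚ_[p]) :
    ∃ (B : GL (Fin n) ℤ_[p]) (R : GL (Fin n) ℚ),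
      (A : Matrix (Fin n) (Fin n) ℚ_[p]) =
        ((B : Matrix (Fin n) (Fin n) ℤ_[p]).map (fun x => (x : ℚ_[p]))) *
          ((R : Matrix (Fin n) (Fin n) ℚ).map (fun q => (q : ℚ_[p]))) := by
  classical
  set Ap : Matrix (Fin n) (Fin n) ℚ_[p] := (A : Matrix (Fin n) (Fin n) ℚ_[p]) with hApdef
  set Ai : Matrix (Fin n) (Fin n) ℚ_[p] := (↑(A⁻¹) : Matrix (Fin n) (Fin n) ℚ_[p]) with hAidef
  have hAinv : Ap * Ai = 1 := by
    rw [hApdef, hAidef, ← Units.val_mul, mul_inv_cancel, Units.val_one]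
  -- bound on entries of A
  set S : ℝ := ∑ i : Fin n, ∑ k : Fin n, ‖Ap i k‖ with hSdef
  have hS0 : 0 ≤ S :=
    Finset.sum_nonneg fun i _ => Finset.sum_nonneg fun k _ => norm_nonneg _
  have hbd : ∀ i k, ‖Ap i k‖ ≤ S := by
    intro i k
    calc ‖Ap i k‖ ≤ ∑ k' : Fin n, ‖Ap i k'‖ :=
          Finset.single_le_sum (fun k' _ => norm_nonneg _) (Finset.mem_univ k)
      _ ≤ S :=
          Finset.single_le_sum
            (fun i' _ => Finset.sum_nonneg fun k' _ => norm_nonneg _) (Finset.mem_univ i)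
  have hS1 : (0:ℝ) < S + 1 := by linarith
  have hε : (0:ℝ) < (S + 1)⁻¹ := inv_pos.mpr hS1
  -- rational approximation of A⁻¹
  choose Mf hMf using fun k j => Padic.rat_dense p (Ai k j) hε
  set Mq : Matrix (Fin n) (Fin n) ℚ := Matrix.of Mf with hMqdef
  set Mp : Matrix (Fin n) (Fin n) ℚ_[p] := Mq.map (fun q : ℚ => (q : ℚ_[p])) with hMpdef
  set B' : Matrix (Fin n) (Fin n) ℚ_[p] := Ap * Mp with hB'def
  set r : ℝ := S * (S + 1)⁻¹ with hrdef
  have hr0 : 0 ≤ r := mul_nonneg hS0 (le_of_lt hε)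
  have hr1 : r < 1 := by
    rw [hrdef, ← div_eq_mul_inv]
    exact (div_lt_one hS1).mpr (by linarith)
  -- entries of B' - 1 are small
  have hEntry : ∀ i j, ‖B' i j - (1 : Matrix (Fin n) (Fin n) ℚ_[p]) i j‖ ≤ r := by
    intro i j
    have hsub : B' - 1 = Ap * (Mp - Ai) := by
      rw [Matrix.mul_sub, hAinv, hB'def]
    have : B' i j - (1 : Matrix (Fin n) (Fin n) ℚ_[p]) i j = (Ap * (Mp - Ai)) i j := by
      rw [← hsub]; rfl
    rw [this, Matrix.mul_apply]
    refine IsUltrametricDist.norm_sum_le_of_forall_le_of_nonneg hr0 ?_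
    intro k _
    rw [norm_mul]
    have hd : ‖(Mp - Ai) k j‖ ≤ (S + 1)⁻¹ := by
      have : (Mp - Ai) k j = -(Ai k j - (Mf k j : ℚ_[p])) := by
        simp [hMpdef, hMqdef, Matrix.sub_apply]
      rw [this, norm_neg]
      exact le_of_lt (hMf k j)
    calc ‖Ap i k‖ * ‖(Mp - Ai) k j‖ ≤ S * (S + 1)⁻¹ :=
      mul_le_mul (hbd i k) hd (norm_nonneg _) hS0
    _ = r := hrdef.symm
  -- entries of B' are integral
  have hB'le1 : ∀ i j, ‖B' i j‖ ≤ 1 := by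
    intro i j
    have h1 : ‖(1 : Matrix (Fin n) (Fin n) ℚ_[p]) i j‖ ≤ 1 := by
      rcases eq_or_ne i j with h | h
      · subst h; rw [Matrix.one_apply_eq, norm_one]
      · rw [Matrix.one_apply_ne h, norm_zero]; norm_num
    have := Padic.nonarchimedean ((1 : Matrix (Fin n) (Fin n) ℚ_[p]) i j)
      (B' i j - (1 : Matrix (Fin n) (Fin n) ℚ_[p]) i j)
    simp only [add_sub_cancel] at this
    exact this.trans (max_le h1 ((hEntry i j).trans (le_of_lt hr1)))
  -- determinant of B' is close to 1
  have hdet : ‖B'.det - 1‖ ≤ r := by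
    rw [Matrix.det_apply]
    rw [← Finset.add_sum_erase _ _ (Finset.mem_univ (1 : Equiv.Perm (Fin n)))]
    have h1 : (Equiv.Perm.sign (1 : Equiv.Perm (Fin n))) • ∏ i, B' ((1 : Equiv.Perm (Fin n)) i) i
        = ∏ i, B' i i := by simp
    rw [h1]
    have key : (∏ i, B' i i) + (∑ σ ∈ Finset.univ.erase (1 : Equiv.Perm (Fin n)),
          Equiv.Perm.sign σ • ∏ i, B' (σ i) i) - 1 =
        ((∏ i, B' i i) - 1) + (∑ σ ∈ Finset.univ.erase (1 : Equiv.Perm (Fin n)),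
          Equiv.Perm.sign σ • ∏ i, B' (σ i) i) := by ring
    rw [key]
    refine (Padic.nonarchimedean _ _).trans (max_le ?_ ?_)
    · refine aux_prod_sub_one hr0 (le_of_lt hr1) _ _ ?_
      intro i _
      have := hEntry i i
      rwa [Matrix.one_apply_eq] at this
    · refine IsUltrametricDist.norm_sum_le_of_forall_le_of_nonneg hr0 ?_
      intro σ hσ
      have hσ1 : σ ≠ 1 := (Finset.mem_erase.mp hσ).1
      obtain ⟨i₀, hi₀⟩ : ∃ i, σ i ≠ i := by
        by_contra h
        push_neg at h
        exact hσ1 (Equiv.ext fun i => h i)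
      have hsmul : ‖(Equiv.Perm.sign σ : ℤˣ) • ∏ i, B' (σ i) i‖ = ‖∏ i, B' (σ i) i‖ := by
        rcases Int.units_eq_one_or (Equiv.Perm.sign σ) with h | h <;>
          simp [h, Units.smul_def, norm_neg]
      rw [hsmul, norm_prod]
      have hoff : ‖B' (σ i₀) i₀‖ ≤ r := by
        have := hEntry (σ i₀) i₀
        rwa [Matrix.one_apply_ne hi₀, sub_zero] at this
      rw [← Finset.mul_prod_erase _ _ (Finset.mem_univ i₀)]
      have hstep : ‖B' (σ i₀) i₀‖ * ∏ i ∈ Finset.univ.erase i₀, ‖B' (σ i) i‖ ≤ r * 1 :=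
        mul_le_mul hoff
          (Finset.prod_le_one (fun i _ => norm_nonneg _) (fun i _ => hB'le1 (σ i) i))
          (Finset.prod_nonneg fun i _ => norm_nonneg _) hr0
      rw [mul_one] at hstep
      exact hstep
  -- the determinant of B' has norm one
  have hdetnorm : ‖B'.det‖ = 1 := by
    have hne : ‖(1:ℚ_[p])‖ ≠ ‖B'.det - 1‖ := by
      rw [norm_one]
      exact (ne_of_lt (lt_of_le_of_lt hdet hr1)).symm
    have := Padic.add_eq_max_of_ne hne
    rw [add_sub_cancel] at this
    rw [this, norm_one, max_eq_left (le_of_lt (lt_of_le_of_lt hdet hr1))]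
  -- B as an element of GL(n, ℤ_p)
  set B₀ : Matrix (Fin n) (Fin n) ℤ_[p] := fun i j => ⟨B' i j, hB'le1 i j⟩ with hB₀def
  have hB₀map : B₀.map (fun x : ℤ_[p] => (x : ℚ_[p])) = B' := by
    ext i j; rfl
  have hB₀det : IsUnit B₀.det := by
    rw [PadicInt.isUnit_iff]
    have : ((B₀.det : ℤ_[p]) : ℚ_[p]) = (B₀.map (PadicInt.Coe.ringHom (p := p))).det := by
      have h := RingHom.map_det (PadicInt.Coe.ringHom (p := p)) B₀
      rw [RingHom.mapMatrix_apply] at h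
      exact h
    rw [PadicInt.norm_def, this]
    have : B₀.map (PadicInt.Coe.ringHom (p := p)) = B' := hB₀map
    rw [this, hdetnorm]
  have hBunit : IsUnit B₀ := (Matrix.isUnit_iff_isUnit_det B₀).mpr hB₀det
  -- M is invertible over ℚ
  have hdetB' : B'.det ≠ 0 := by
    intro h; rw [h, norm_zero] at hdetnorm; exact zero_ne_one hdetnorm
  have hdetMp : Mp.det ≠ 0 := by
    intro h
    apply hdetB'
    rw [hB'def, Matrix.det_mul, h, mul_zero]
  have hdetMq : Mq.det ≠ 0 := by
    intro h
    apply hdetMp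
    have : Mp.det = ((Mq.det : ℚ) : ℚ_[p]) := by
      rw [hMpdef]
      rw [show (fun q : ℚ => (q : ℚ_[p])) = ⇑(Rat.castHom ℚ_[p]) from rfl,
        ← RingHom.mapMatrix_apply, ← RingHom.map_det]
      rfl
    rw [this, h]; simp
  have hMqunit : IsUnit Mq := (Matrix.isUnit_iff_isUnit_det Mq).mpr
    (isUnit_iff_ne_zero.mpr hdetMq)
  refine ⟨hBunit.unit, hMqunit.unit⁻¹, ?_⟩
  have hRcoe : ((hMqunit.unit⁻¹ : GL (Fin n) ℚ) : Matrix (Fin n) (Fin n) ℚ) = Mq⁻¹ := by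
    rw [Matrix.coe_units_inv, hMqunit.unit_spec]
  have hBcoe : ((hBunit.unit : GL (Fin n) ℤ_[p]) : Matrix (Fin n) (Fin n) ℤ_[p]) = B₀ :=
    hBunit.unit_spec
  rw [hRcoe, hBcoe, hB₀map]
  -- now show Ap = B' * (Mq⁻¹).map coe
  have hMpX : Mp * (Mq⁻¹.map (fun q : ℚ => (q : ℚ_[p]))) = 1 := by
    have hmap : ∀ X Y : Matrix (Fin n) (Fin n) ℚ,
        (X * Y).map (fun q : ℚ => (q : ℚ_[p])) =
          X.map (fun q : ℚ => (q : ℚ_[p])) * Y.map (fun q : ℚ => (q : ℚ_[p])) := by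
      intro X Y
      exact Matrix.map_mul (f := Rat.castHom ℚ_[p])
    rw [hMpdef, ← hmap, Matrix.mul_nonsing_inv Mq (isUnit_iff_ne_zero.mpr hdetMq)]
    ext i j
    rcases eq_or_ne i j with h | h <;> simp [Matrix.one_apply, h]
  calc Ap = Ap * (Mp * (Mq⁻¹.map (fun q : ℚ => (q : ℚ_[p])))) := by rw [hMpX, mul_one]
    _ = B' * (Mq⁻¹.map (fun q : ℚ => (q : ℚ_[p]))) := by rw [← mul_assoc, ← hB'def]
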